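/- Assume the coherence assumption with constant μ > 0 and φ'(z) ≥ ρ1 > 0 for all z ∈ ℝ. Then the loss L satisfies the Polyak–Łojasiewicz inequality: for every θ ∈ ℝ^{md}, ‖DL(θ)‖² ≥ 4 m μ ρ1² · L(θ), where DL(θ) is the Euclidean gradient of L at θ. -/

import Mathlib

open scoped RealInnerProductSpace
open Real Filter

noncomputable section

/-- The parameter space ℝ^{md}: m blocks θ_j ∈ ℝ^d, with the Euclidean norm. -/
abbrev Param (m d : ℕ) : Type := PiLp 2 (fun _ : Fin m => EuclideanSpace ℝ (Fin d))

/-- Network output f_i(θ) = Σ_j φ(θ_j · x_i). -/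
def netF {n m d : ℕ} (φ : ℝ → ℝ) (x : Fin n → EuclideanSpace ℝ (Fin d)) (i : Fin n)
    (θ : Param m d) : ℝ := ∑ j, φ ⟪θ j, x i⟫

/-- Euclidean gradient Df_i(θ), with j-th block φ'(θ_j · x_i) x_i. -/
def gradF {n m d : ℕ} (φ : ℝ → ℝ) (x : Fin n → EuclideanSpace ℝ (Fin d)) (i : Fin n)
    (θ : Param m d) : Param m d := WithLp.toLp 2 fun j => (deriv φ ⟪θ j, x i⟫) • x i

/-- Implicit regularizer G(θ) = Σ_i Σ_j φ'(θ_j · x_i)². -/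
def regG {n m d : ℕ} (φ : ℝ → ℝ) (x : Fin n → EuclideanSpace ℝ (Fin d))
    (θ : Param m d) : ℝ := ∑ i, ∑ j, (deriv φ ⟪θ j, x i⟫) ^ 2

/-- Euclidean gradient DG(θ), with j-th block Σ_i 2 φ'(θ_j·x_i) φ''(θ_j·x_i) x_i. -/
def gradRegG {n m d : ℕ} (φ : ℝ → ℝ) (x : Fin n → EuclideanSpace ℝ (Fin d))
    (θ : Param m d) : Param m d :=
  WithLp.toLp 2 fun j => ∑ i, (2 * deriv φ ⟪θ j, x i⟫ * deriv (deriv φ) ⟪θ j, x i⟫) • x i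

/-- Squared loss L(θ) = Σ_i (f_i(θ) − y_i)². -/
def lossL {n m d : ℕ} (φ : ℝ → ℝ) (x : Fin n → EuclideanSpace ℝ (Fin d)) (y : Fin n → ℝ)
    (θ : Param m d) : ℝ := ∑ i, (netF φ x i θ - y i) ^ 2

/-- Jacobian Df(θ) : ℝ^{md} → ℝ^n, whose i-th row is Df_i(θ). -/
def jacobian {n m d : ℕ} (φ : ℝ → ℝ) (x : Fin n → EuclideanSpace ℝ (Fin d))
    (θ : Param m d) : Param m d →ₗ[ℝ] (Fin n → ℝ) :=
  LinearMap.pi fun i => (innerSL ℝ (gradF φ x i θ)).toLinearMap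

/-- Riemannian gradient ∇G(θ): orthogonal projection of DG(θ) onto ker Df(θ). -/
def rgradG {n m d : ℕ} (φ : ℝ → ℝ) (x : Fin n → EuclideanSpace ℝ (Fin d))
    (θ : Param m d) : Param m d :=
  ((LinearMap.ker (jacobian φ x θ)).orthogonalProjectionOnto (gradRegG φ x θ) : Param m d)

section Aux

lemma hasFDerivAt_netF {n m d : ℕ} (φ : ℝ → ℝ) (hφ : ContDiff ℝ (⊤ : ℕ∞) φ)
    (x : Fin n → EuclideanSpace ℝ (Fin d)) (i : Fin n) (θ : Param m d) :
    HasFDerivAt (netF φ x i) (innerSL ℝ (gradF φ x i θ)) θ := by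
  have h1 : ∀ j : Fin m, HasFDerivAt (fun θ' : Param m d => φ ⟪θ' j, x i⟫)
      ((deriv φ ⟪θ j, x i⟫) • ((innerSL ℝ (x i)).comp (PiLp.proj 2 _ j))) θ := by
    intro j
    have hl : HasFDerivAt (fun θ' : Param m d => ⟪θ' j, x i⟫)
        ((innerSL ℝ (x i)).comp (PiLp.proj 2 _ j)) θ := by
      have := ((innerSL ℝ (x i)).comp
        (PiLp.proj (𝕜 := ℝ) 2 (fun _ : Fin m => EuclideanSpace ℝ (Fin d)) j)).hasFDerivAt (x := θ)
      convert this using 2 with θ'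
      simpa using (real_inner_comm (x i) (θ' j))
    have hφd : HasDerivAt φ (deriv φ ⟪θ j, x i⟫) ⟪θ j, x i⟫ :=
      ((hφ.differentiable (by norm_num)) _).hasDerivAt
    exact hφd.comp_hasFDerivAt θ hl
  have := HasFDerivAt.fun_sum (fun j (_ : j ∈ Finset.univ) => h1 j)
  refine this.congr_fderiv (Eq.symm ?_)
  ext v
  simp [gradF, PiLp.inner_apply, inner_smul_left, real_inner_comm]

lemma hasGradientAt_lossL {n m d : ℕ} (φ : ℝ → ℝ) (hφ : ContDiff ℝ (⊤ : ℕ∞) φ)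
    (x : Fin n → EuclideanSpace ℝ (Fin d)) (y : Fin n → ℝ) (θ : Param m d) :
    HasGradientAt (lossL φ x y)
      (WithLp.toLp 2 fun j => ∑ i, (2 * (netF φ x i θ - y i) * deriv φ ⟪θ j, x i⟫) • x i) θ := by
  rw [hasGradientAt_iff_hasFDerivAt]
  have h1 : ∀ i : Fin n, HasFDerivAt (fun θ' : Param m d => (netF φ x i θ' - y i) ^ 2)
      ((2 * (netF φ x i θ - y i)) • innerSL ℝ (gradF φ x i θ)) θ := by
    intro i
    have hb := (hasFDerivAt_netF φ hφ x i θ).sub_const (y i)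
    have h2 : (fun θ' : Param m d => (netF φ x i θ' - y i) ^ 2)
        = fun θ' => (netF φ x i θ' - y i) * (netF φ x i θ' - y i) := by
      funext θ'; ring
    rw [h2]
    refine (hb.mul hb).congr_fderiv (Eq.symm ?_)
    module
  have := HasFDerivAt.fun_sum (fun i (_ : i ∈ Finset.univ) => h1 i)
  refine this.congr_fderiv (Eq.symm ?_)
  ext v
  rw [InnerProductSpace.toDual_apply_apply]
  rw [PiLp.inner_apply (𝕜 := ℝ) (f := fun _ : Fin m => EuclideanSpace ℝ (Fin d))]
  simp only [ContinuousLinearMap.sum_apply, ContinuousLinearMap.smul_apply, innerSL_apply_apply,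
    smul_eq_mul]
  have hL : ∀ j : Fin m,
      (⟪(WithLp.toLp 2 fun j => ∑ i, (2 * (netF φ x i θ - y i) * deriv φ ⟪θ j, x i⟫) • x i : Param m d) j, v j⟫)
        = ∑ i, 2 * (netF φ x i θ - y i) * deriv φ ⟪θ j, x i⟫ * ⟪x i, v j⟫ := by
    intro j
    rw [sum_inner]
    exact Finset.sum_congr rfl fun i _ => real_inner_smul_left _ _ _
  have hR : ∀ i : Fin n, (⟪gradF φ x i θ, v⟫ : ℝ)
      = ∑ j, deriv φ ⟪θ j, x i⟫ * ⟪x i, v j⟫ := by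
    intro i
    rw [PiLp.inner_apply (𝕜 := ℝ) (f := fun _ : Fin m => EuclideanSpace ℝ (Fin d))]
    exact Finset.sum_congr rfl fun j _ => real_inner_smul_left _ _ _
  simp only [hL, hR, Finset.mul_sum]
  rw [Finset.sum_comm]
  exact Finset.sum_congr rfl fun i _ => Finset.sum_congr rfl fun j _ => by ring

end Aux

/-- Polyak–Łojasiewicz inequality ‖DL(θ)‖² ≥ 4 m μ ρ1² L(θ). -/
theorem stmt_9
    (n m d : ℕ) (hn : 1 ≤ n) (hm : 1 ≤ m) (hd : 1 ≤ d)
    (x : Fin n → EuclideanSpace ℝ (Fin d)) (hx : ∀ i, ‖x i‖ = 1)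
    (μ : ℝ) (hμ : 0 < μ)
    (hcoh : ∀ c : Fin n → ℝ, μ * ∑ i, (c i) ^ 2 ≤ ‖∑ i, c i • x i‖ ^ 2)
    (y : Fin n → ℝ)
    (φ : ℝ → ℝ) (hφ : ContDiff ℝ (⊤ : ℕ∞) φ)
    (ρ1 : ℝ) (hρ1 : 0 < ρ1)
    (hφ' : ∀ z, ρ1 ≤ deriv φ z)
    (θ : Param m d) :
    4 * (m : ℝ) * μ * ρ1 ^ 2 * lossL φ x y θ ≤ ‖gradient (lossL φ x y) θ‖ ^ 2 := by
  set g : Param m d := WithLp.toLp 2 fun j => ∑ i, (2 * (netF φ x i θ - y i) * deriv φ ⟪θ j, x i⟫) • x i with hg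
  have hgrad : gradient (lossL φ x y) θ = g := (hasGradientAt_lossL φ hφ x y θ).gradient
  rw [hgrad]
  have hnorm : ‖g‖ ^ 2 = ∑ j, ‖g j‖ ^ 2 := by
    rw [PiLp.norm_sq_eq_of_L2]
  rw [hnorm]
  have key : ∀ j : Fin m, 4 * μ * ρ1 ^ 2 * lossL φ x y θ ≤ ‖g j‖ ^ 2 := by
    intro j
    have h1 := hcoh (fun i => 2 * (netF φ x i θ - y i) * deriv φ ⟪θ j, x i⟫)
    have h2 : 4 * μ * ρ1 ^ 2 * lossL φ x y θ
        ≤ μ * ∑ i, (2 * (netF φ x i θ - y i) * deriv φ ⟪θ j, x i⟫) ^ 2 := by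
      rw [lossL, Finset.mul_sum, Finset.mul_sum]
      refine Finset.sum_le_sum fun i _ => ?_
      have hz := hφ' ⟪θ j, x i⟫
      have hsq : ρ1 ^ 2 ≤ (deriv φ ⟪θ j, x i⟫) ^ 2 :=
        pow_le_pow_left₀ hρ1.le hz 2
      have hr : (0:ℝ) ≤ (netF φ x i θ - y i) ^ 2 := sq_nonneg _
      have hmono := mul_le_mul_of_nonneg_left hsq (mul_nonneg hμ.le hr)
      nlinarith [hmono]
    exact h2.trans h1
  calc 4 * (m : ℝ) * μ * ρ1 ^ 2 * lossL φ x y θ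
      = ∑ _j : Fin m, 4 * μ * ρ1 ^ 2 * lossL φ x y θ := by
        rw [Finset.sum_const, Finset.card_univ, Fintype.card_fin]; ring
    _ ≤ ∑ j, ‖g j‖ ^ 2 := Finset.sum_le_sum fun j _ => key j
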